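/- Let c, d : V → M be a Majorana family in the Clifford algebra of a quadratic form Q over ℂ. Then for all indices i, j, k, l in V, the commutator satisfies ⁅ι(c k) * ι(d l), ι(c i) * ι(d j)⁆ = 2 • ( (if j = l then ι(c i) * ι(c k) else 0) + (if i = k then ι(d j) * ι(d l) else 0) − (if i = k ∧ j = l then 2 else 0) ), where ⁅a,b⁆ = a*b − b*a. In particular the commutator vanishes whenever i ≠ k and j ≠ l, and also when i = k and j = l. -/

import Mathlib

private lemma swap3 {R : Type*} [Ring R] {a b : R} (h : a*b = -(b*a)) (x : R) :
    a*(b*x) = -(b*(a*x)) := by rw [← mul_assoc, h, neg_mul, mul_assoc]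

private lemma sq3 {R : Type*} [Ring R] {a : R} (h : a*a = 1) (x : R) :
    a*(a*x) = x := by rw [← mul_assoc, h, one_mul]

theorem majorana_pair_commutator {V : Type*} [DecidableEq V]
    {M : Type*} [AddCommGroup M] [Module ℂ M]
    (Q : QuadraticForm ℂ M) (c d : V → M)
    (hQc : ∀ v, Q (c v) = 1) (hQd : ∀ v, Q (d v) = 1)
    (hcc : ∀ v w, v ≠ w → QuadraticMap.polar Q (c v) (c w) = 0)
    (hdd : ∀ v w, v ≠ w → QuadraticMap.polar Q (d v) (d w) = 0)
    (hcd : ∀ v w, QuadraticMap.polar Q (c v) (d w) = 0)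
    (i j k l : V) :
    (⁅CliffordAlgebra.ι Q (c k) * CliffordAlgebra.ι Q (d l),
        CliffordAlgebra.ι Q (c i) * CliffordAlgebra.ι Q (d j)⁆ =
      2 • ((if j = l then CliffordAlgebra.ι Q (c i) * CliffordAlgebra.ι Q (c k) else 0) +
           (if i = k then CliffordAlgebra.ι Q (d j) * CliffordAlgebra.ι Q (d l) else 0) -
           (if i = k ∧ j = l then (2 : CliffordAlgebra Q) else 0))) ∧
    (i ≠ k → j ≠ l →
      ⁅CliffordAlgebra.ι Q (c k) * CliffordAlgebra.ι Q (d l),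
        CliffordAlgebra.ι Q (c i) * CliffordAlgebra.ι Q (d j)⁆ = 0) ∧
    (i = k → j = l →
      ⁅CliffordAlgebra.ι Q (c k) * CliffordAlgebra.ι Q (d l),
        CliffordAlgebra.ι Q (c i) * CliffordAlgebra.ι Q (d j)⁆ = 0) := by
  have anti : ∀ x y : M, QuadraticMap.polar Q x y = 0 →
      CliffordAlgebra.ι Q x * CliffordAlgebra.ι Q y
        = -(CliffordAlgebra.ι Q y * CliffordAlgebra.ι Q x) := by
    intro x y h
    have h2 := CliffordAlgebra.ι_mul_ι_add_swap (Q := Q) x y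
    rw [h, map_zero] at h2
    exact eq_neg_of_add_eq_zero_left h2
  have hdc : ∀ v w, QuadraticMap.polar Q (d w) (c v) = 0 := fun v w => by
    rw [QuadraticMap.polar_comm]; exact hcd v w
  have sq1 : ∀ x : M, Q x = 1 →
      CliffordAlgebra.ι Q x * CliffordAlgebra.ι Q x = 1 := by
    intro x h
    rw [CliffordAlgebra.ι_sq_scalar, h, map_one]
  have main : ⁅CliffordAlgebra.ι Q (c k) * CliffordAlgebra.ι Q (d l),
        CliffordAlgebra.ι Q (c i) * CliffordAlgebra.ι Q (d j)⁆ =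
      2 • ((if j = l then CliffordAlgebra.ι Q (c i) * CliffordAlgebra.ι Q (c k) else 0) +
           (if i = k then CliffordAlgebra.ι Q (d j) * CliffordAlgebra.ι Q (d l) else 0) -
           (if i = k ∧ j = l then (2 : CliffordAlgebra Q) else 0)) := by
    by_cases hik : i = k <;> by_cases hjl : j = l
    · subst hik; subst hjl
      rw [Ring.lie_def, sub_self, sq1 _ (hQc i), sq1 _ (hQd j), if_pos rfl, if_pos rfl,
        if_pos (show i = i ∧ j = j from ⟨rfl, rfl⟩)]
      norm_num
    · subst hik
      -- order: C = ι(c i), B = ι(d j), D = ι(d l); normal order C B D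
      have hBC := anti (d j) (c i) (hdc i j)
      have hDC := anti (d l) (c i) (hdc i l)
      have hDB := anti (d l) (d j) (hdd l j (Ne.symm hjl))
      have hCC := sq1 (c i) (hQc i)
      rw [if_pos rfl, if_neg hjl, if_neg (fun h : i = i ∧ j = l => hjl h.2)]
      simp only [Ring.lie_def, two_smul, mul_assoc]
      simp only [swap3 hBC, swap3 hDC, swap3 hDB, hBC, hDC, hDB,
        sq3 hCC, hCC, mul_neg, neg_mul, neg_neg, mul_one, one_mul]
      abel
    · subst hjl
      -- A = ι(c i), C = ι(c k), B = ι(d j); normal order A C B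
      have hCA := anti (c k) (c i) (hcc k i (Ne.symm hik))
      have hBA := anti (d j) (c i) (hdc i j)
      have hBC := anti (d j) (c k) (hdc k j)
      have hBB := sq1 (d j) (hQd j)
      rw [if_pos rfl, if_neg hik, if_neg (fun h : i = k ∧ j = j => hik h.1)]
      simp only [Ring.lie_def, two_smul, mul_assoc]
      simp only [swap3 hCA, swap3 hBA, swap3 hBC, hCA, hBA, hBC,
        sq3 hBB, hBB, mul_neg, neg_mul, neg_neg, mul_one, one_mul]
      abel
    · -- A C B D order
      have hCA := anti (c k) (c i) (hcc k i (Ne.symm hik))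
      have hBA := anti (d j) (c i) (hdc i j)
      have hBC := anti (d j) (c k) (hdc k j)
      have hDA := anti (d l) (c i) (hdc i l)
      have hDC := anti (d l) (c k) (hdc k l)
      have hDB := anti (d l) (d j) (hdd l j (Ne.symm hjl))
      rw [if_neg hik, if_neg hjl, if_neg (fun h : i = k ∧ j = l => hik h.1)]
      simp only [Ring.lie_def, two_smul, mul_assoc]
      simp only [swap3 hCA, swap3 hBA, swap3 hBC, swap3 hDA, swap3 hDC, swap3 hDB,
        hCA, hBA, hBC, hDA, hDC, hDB, mul_neg, neg_mul, neg_neg, mul_one, one_mul]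
      abel
  refine ⟨main, ?_, ?_⟩
  · intro h1 h2
    rw [main, if_neg h2, if_neg h1, if_neg (fun h : i = k ∧ j = l => h1 h.1)]
    simp
  · intro h1 h2
    subst h1; subst h2
    rw [main, if_pos rfl, if_pos rfl, if_pos (show i = i ∧ j = j from ⟨rfl, rfl⟩),
      sq1 _ (hQc i), sq1 _ (hQd j)]
    norm_num
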